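/- The second derivative of the strategic payoff π_i with respect to θ_i equals S_i''(q_i)·(∂Q/∂θ_i)² + S_i'(q_i)·(-2/∑_j θ_j)·(∂Q/∂θ_i), where q_i = Q(θ_i, p(θ)); in particular, if ∑_j θ_j < 0, ∑_{j≠i} θ_j < 0, S_i'' ≤ 0 and S_i' > 0, then π_i is concave in θ_i on the region where θ_i ≥ -(∑_{j≠i} θ_j)·((N d_min/2)·S_i''(q_i)/S_i'(q_i) + 1). -/

import Mathlib

open Filter Topology


/-- Prosumer `i`'s strategic payoff as a function of its own parameter `t`,
with the other players' parameters summing to `c`, so that the price is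
`p = -(t + c)/(N d_min)` and `Q = d_min + t/p`. -/
noncomputable def payoffFun (N : ℕ) (dmin : ℝ) (S : ℝ → ℝ) (c : ℝ) : ℝ → ℝ :=
  fun t => S (dmin + t / (-(t + c) / (N * dmin)))
    - (-(t + c) / (N * dmin)) * (dmin + t / (-(t + c) / (N * dmin)))

lemma key (N : ℕ) (hN : 2 ≤ N) (dmin : ℝ) (hd : 0 < dmin) (S : ℝ → ℝ)
    (hC2 : ContDiff ℝ 2 S) (c : ℝ) (t : ℝ) (ht : t + c < 0) :
    deriv (deriv (payoffFun N dmin S c)) t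
      = deriv (deriv S) (dmin + t / (-(t + c) / (N * dmin)))
          * (-c * N * dmin / (t + c) ^ 2) ^ 2
        + deriv S (dmin + t / (-(t + c) / (N * dmin)))
          * (-2 / (t + c)) * (-c * N * dmin / (t + c) ^ 2) := by
  have hN2 : (2:ℝ) ≤ N := by exact_mod_cast hN
  have hNpos : (0:ℝ) < N := by linarith
  have hNd : (N:ℝ) * dmin ≠ 0 := by positivity
  have hdn : dmin ≠ 0 := ne_of_gt hd
  have hNn : (N:ℝ) ≠ 0 := ne_of_gt hNpos
  have hS1 : Differentiable ℝ S := hC2.differentiable two_ne_zero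
  have hS2 : Differentiable ℝ (deriv S) := by
    have h : ContDiff ℝ ((1:WithTop ℕ∞) + 1) S := by
      rw [one_add_one_eq_two]; exact hC2
    exact (contDiff_succ_iff_deriv.mp h).2.2.differentiable one_ne_zero
  set q : ℝ → ℝ := fun y => dmin - N * dmin * (y / (y + c)) with hqdef
  set U : Set ℝ := {x | x + c < 0} with hUdef
  have hUopen : IsOpen U := isOpen_lt (by fun_prop) continuous_const
  have htU : t ∈ U := ht
  -- derivative of q
  have hq : ∀ x ∈ U, HasDerivAt q (-c * N * dmin / (x + c) ^ 2) x := by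
    intro x hx
    have hx0 : (x + c) ≠ 0 := ne_of_lt hx
    have h1 : HasDerivAt (fun y : ℝ => y / (y + c)) (c / (x + c) ^ 2) x := by
      have h := (hasDerivAt_id' x).div ((hasDerivAt_id' x).add_const c) hx0
      refine h.congr_deriv ?_
      field_simp
      ring
    have h2 := (h1.const_mul ((N:ℝ) * dmin)).const_sub dmin
    refine h2.congr_deriv ?_
    field_simp
  -- argument rewriting
  have harg : ∀ x ∈ U, dmin + x / (-(x + c) / (N * dmin)) = q x := by
    intro x hx
    have hx0 : (x + c) ≠ 0 := ne_of_lt hx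
    simp only [hqdef]
    rw [div_div_eq_mul_div, div_neg]
    ring
  -- payoffFun agrees with g on U
  set g : ℝ → ℝ := fun x => S (q x) + ((x + c) / N - x) with hgdef
  have heq : ∀ x ∈ U, payoffFun N dmin S c x = g x := by
    intro x hx
    have hx0 : (x + c) ≠ 0 := ne_of_lt hx
    simp only [payoffFun, hgdef, harg x hx]
    have h2 : (-(x + c) / (N * dmin)) * q x = x - (x + c) / N := by
      simp only [hqdef]
      field_simp
      ring
    rw [h2]; ring
  set g1 : ℝ → ℝ := fun y => deriv S (q y) * (-c * N * dmin / (y + c) ^ 2) + (1 / N - 1)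
    with hg1def
  -- first derivative on U
  have hderiv1 : ∀ x ∈ U, deriv (payoffFun N dmin S c) x = g1 x := by
    intro x hx
    have hev : payoffFun N dmin S c =ᶠ[𝓝 x] g :=
      eventuallyEq_of_mem (hUopen.mem_nhds hx) heq
    rw [hev.deriv_eq]
    have hlin : HasDerivAt (fun y : ℝ => (y + c) / N - y) (1 / N - 1) x := by
      have := (((hasDerivAt_id' x).add_const c).div_const (N:ℝ)).sub (hasDerivAt_id' x)
      exact this
    have hcomp : HasDerivAt (fun y => S (q y))
        (deriv S (q x) * (-c * N * dmin / (x + c) ^ 2)) x :=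
      (hS1 (q x)).hasDerivAt.comp x (hq x hx)
    exact (hcomp.add hlin).deriv
  -- second derivative
  have hev2 : deriv (payoffFun N dmin S c) =ᶠ[𝓝 t] g1 :=
    eventuallyEq_of_mem (hUopen.mem_nhds htU) hderiv1
  rw [hev2.deriv_eq]
  have ht0 : (t + c) ≠ 0 := ne_of_lt ht
  have hA : HasDerivAt (fun y => deriv S (q y))
      (deriv (deriv S) (q t) * (-c * N * dmin / (t + c) ^ 2)) t :=
    (hS2 (q t)).hasDerivAt.comp t (hq t htU)
  have hB : HasDerivAt (fun y : ℝ => -c * N * dmin / (y + c) ^ 2)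
      (2 * c * N * dmin / (t + c) ^ 3) t := by
    have hpow : HasDerivAt (fun y : ℝ => (y + c) ^ 2) (2 * (t + c)) t := by
      have := ((hasDerivAt_id' t).add_const c).pow 2
      exact this.congr_deriv (by norm_num)
    have h := (hasDerivAt_const t (-c * (N:ℝ) * dmin)).div hpow (pow_ne_zero 2 ht0)
    refine h.congr_deriv ?_
    field_simp
    ring
  have hg1 : HasDerivAt g1
      (deriv (deriv S) (q t) * (-c * N * dmin / (t + c) ^ 2) * (-c * N * dmin / (t + c) ^ 2)
        + deriv S (q t) * (2 * c * N * dmin / (t + c) ^ 3)) t :=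
    (hA.mul hB).add_const (1 / (N:ℝ) - 1)
  rw [hg1.deriv, harg t htU]
  field_simp

/-- Lemma 2 computation: the second derivative of the strategic
payoff is `Sᵢ''(qᵢ)(∂Q/∂θᵢ)² + Sᵢ'(qᵢ)(-2/∑ⱼθⱼ)(∂Q/∂θᵢ)` where
`∂Q/∂θᵢ = -c·N·d_min/(∑ⱼθⱼ)²`; if moreover `∑ⱼθⱼ < 0`, `c < 0`, `S'' ≤ 0`
and `S' > 0`, the payoff is concave (second derivative `≤ 0`) on the region
`θᵢ ≥ -c((N d_min/2)·S''(qᵢ)/S'(qᵢ) + 1)`. -/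
theorem stmt11 (N : ℕ) (hN : 2 ≤ N) (dmin : ℝ) (hd : 0 < dmin) (S : ℝ → ℝ)
    (hC2 : ContDiff ℝ 2 S) (hS' : ∀ q, 0 < deriv S q)
    (hS'' : ∀ q, deriv (deriv S) q ≤ 0) (c : ℝ) (hc : c < 0)
    (θi : ℝ) (hsum : θi + c < 0) :
    deriv (deriv (payoffFun N dmin S c)) θi
      = deriv (deriv S) (dmin + θi / (-(θi + c) / (N * dmin)))
          * (-c * N * dmin / (θi + c) ^ 2) ^ 2
        + deriv S (dmin + θi / (-(θi + c) / (N * dmin)))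
          * (-2 / (θi + c)) * (-c * N * dmin / (θi + c) ^ 2) ∧
    ∀ t : ℝ, t + c < 0 →
      -c * ((N * dmin / 2)
          * deriv (deriv S) (dmin + t / (-(t + c) / (N * dmin)))
          / deriv S (dmin + t / (-(t + c) / (N * dmin))) + 1) ≤ t →
      deriv (deriv (payoffFun N dmin S c)) t ≤ 0 := by
  refine ⟨key N hN dmin hd S hC2 c θi hsum, ?_⟩
  intro t ht hcond
  rw [key N hN dmin hd S hC2 c t ht]
  set r1 := deriv S (dmin + t / (-(t + c) / (N * dmin))) with hr1def
  set r2 := deriv (deriv S) (dmin + t / (-(t + c) / (N * dmin))) with hr2def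
  have hr1 : 0 < r1 := hS' _
  have hr2 : r2 ≤ 0 := hS'' _
  have hN2 : (2:ℝ) ≤ N := by exact_mod_cast hN
  have hNpos : (0:ℝ) < N := by linarith
  have ht0 : (t + c) ≠ 0 := ne_of_lt ht
  -- from the condition, derive the key inequality
  have hre : -c * ((N * dmin / 2) * r2 / r1 + 1) = (-c * (N * dmin / 2) * r2) / r1 - c := by
    field_simp
    ring
  have h2 : (-c * (N * dmin / 2) * r2) / r1 ≤ t + c := by
    rw [hre] at hcond; linarith
  have hkey : -c * (N * dmin / 2) * r2 ≤ (t + c) * r1 := (div_le_iff₀ hr1).mp h2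
  have hnum : r2 * (c * N * dmin) ^ 2 + 2 * r1 * (c * N * dmin) * (t + c) ≤ 0 := by
    have hfac : 0 ≤ (t + c) * r1 + c * (N * dmin / 2) * r2 := by linarith
    have hneg : 2 * ((N:ℝ) * dmin) * c ≤ 0 := by
      have : 0 < (N:ℝ) * dmin := by positivity
      nlinarith
    nlinarith [mul_nonpos_of_nonpos_of_nonneg hneg hfac]
  have hrw : r2 * (-c * N * dmin / (t + c) ^ 2) ^ 2
      + r1 * (-2 / (t + c)) * (-c * N * dmin / (t + c) ^ 2)
      = (r2 * (c * N * dmin) ^ 2 + 2 * r1 * (c * N * dmin) * (t + c)) / (t + c) ^ 4 := by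
    field_simp
  rw [hrw]
  apply div_nonpos_of_nonpos_of_nonneg hnum
  positivity
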